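/- For every γ ∈ (1 − 2π⁻², 1) there exists a function v of Sobolev class W¹₂[0,1] such that ∫₀¹ (v')² dx + (2/(1−γ)) · ((∫₀¹ v dx)² − ∫₀¹ v² dx) < 0; equivalently, the quadratic form of the second differential of G_γ at the constant function ŷ ≡ 1 is not nonnegative definite. -/

import Mathlib

open MeasureTheory Set Real

noncomputable section

/-- Pairs `(y, y')` representing a function of Sobolev class `W¹₂[0,1]`:
`y` is absolutely continuous on `[0,1]` (being an integral of `y'`)
with derivative `y'` belonging to `L²[0,1]`. -/
def W12 : Set ((ℝ → ℝ) × (ℝ → ℝ)) :=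
  {p | (∀ x ∈ Icc (0:ℝ) 1, p.1 x = p.1 0 + ∫ t in (0:ℝ)..x, p.2 t) ∧
    IntervalIntegrable p.2 volume 0 1 ∧
    IntervalIntegrable (fun t => (p.2 t) ^ 2) volume 0 1}

/-- The Rayleigh quotient `(∫₀¹ ((y')² + q y²) dx) / (∫₀¹ y² dx)`. -/
def Rayleigh (q : ℝ → ℝ) (p : (ℝ → ℝ) × (ℝ → ℝ)) : ℝ :=
  (∫ t in (0:ℝ)..1, ((p.2 t) ^ 2 + q t * (p.1 t) ^ 2)) /
    ∫ t in (0:ℝ)..1, (p.1 t) ^ 2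

/-- The smallest eigenvalue `λ₁(q)` of the Neumann problem `-y'' + q y = λ y`,
`y'(0) = y'(1) = 0`, defined as the infimum of Rayleigh quotients over
nonzero `y ∈ W¹₂[0,1]`. -/
def lambda1 (q : ℝ → ℝ) : ℝ :=
  sInf {r | ∃ p ∈ W12, 0 < (∫ t in (0:ℝ)..1, (p.1 t) ^ 2) ∧ r = Rayleigh q p}

/-- The class `A_γ` of potentials: `q ∈ L¹[0,1]`, `q ≥ 0` a.e. on `[0,1]`,
`∫₀¹ q^γ dx = 1`. -/
def Agamma (γ : ℝ) : Set (ℝ → ℝ) :=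
  {q | IntervalIntegrable q volume 0 1 ∧
    (∀ᵐ t ∂(volume.restrict (Icc (0:ℝ) 1)), 0 ≤ q t) ∧
    (∫ t in (0:ℝ)..1, q t ^ γ) = 1}

/-- `m_γ := inf_{q ∈ A_γ} λ₁(q)`. -/
def mGamma (γ : ℝ) : ℝ := sInf (lambda1 '' Agamma γ)

/-- The set `M` of uniformly positive functions of class `W¹₂[0,1]`. -/
def Mset : Set ((ℝ → ℝ) × (ℝ → ℝ)) :=
  {p ∈ W12 | ∃ ζ > (0:ℝ), ∀ x ∈ Icc (0:ℝ) 1, ζ ≤ p.1 x}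

/-- `J_γ(y) := ∫₀¹ (y')² dx + (∫₀¹ y^{2γ/(γ−1)} dx)^{(γ−1)/γ}`. -/
def Jg (γ : ℝ) (p : (ℝ → ℝ) × (ℝ → ℝ)) : ℝ :=
  (∫ t in (0:ℝ)..1, (p.2 t) ^ 2) +
    (∫ t in (0:ℝ)..1, (p.1 t) ^ (2 * γ / (γ - 1))) ^ ((γ - 1) / γ)

/-- `G_γ(y) := J_γ(y) / ∫₀¹ y² dx`. -/
def Gg (γ : ℝ) (p : (ℝ → ℝ) × (ℝ → ℝ)) : ℝ :=
  Jg γ p / ∫ t in (0:ℝ)..1, (p.1 t) ^ 2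


open intervalIntegral in
private lemma cosInt (x : ℝ) : ∫ t in (0:ℝ)..x, -π * sin (π * t) = cos (π * x) - 1 := by
  have h := intervalIntegral.integral_comp_mul_left (a := 0) (b := x) (fun u => sin u) (c := π) pi_ne_zero
  rw [intervalIntegral.integral_const_mul, h, integral_sin]
  field_simp
  rw [smul_eq_mul, mul_zero, cos_zero]
  linear_combination (cos (π * x) - 1) * (mul_one_div_cancel pi_ne_zero : π * (1 / π) = 1)

open intervalIntegral in
private lemma cosMean : ∫ t in (0:ℝ)..1, cos (π * t) = 0 := by
  have h := intervalIntegral.integral_comp_mul_left (a := 0) (b := 1) (fun u => cos u) (c := π) pi_ne_zero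
  rw [h, integral_cos]
  simp

open intervalIntegral in
private lemma cosSq : ∫ t in (0:ℝ)..1, (cos (π * t)) ^ 2 = 1/2 := by
  have h := intervalIntegral.integral_comp_mul_left (a := 0) (b := 1) (fun u => cos u ^ 2) (c := π) pi_ne_zero
  rw [h, integral_cos_sq]
  simp
  rw [inv_mul_eq_div, div_eq_iff pi_ne_zero]
  ring

open intervalIntegral in
private lemma sinSq : ∫ t in (0:ℝ)..1, (-π * sin (π * t)) ^ 2 = π^2/2 := by
  have h := intervalIntegral.integral_comp_mul_left (a := 0) (b := 1) (fun u => sin u ^ 2) (c := π) pi_ne_zero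
  have : ∀ t:ℝ, (-π * sin (π * t)) ^ 2 = π^2 * (fun u => sin u ^2) (π * t) := by intro t; simp; ring
  simp_rw [this]
  rw [intervalIntegral.integral_const_mul, h, integral_sin_sq]
  simp
  field_simp

/-- For `γ ∈ (1 − 2π⁻², 1)` the quadratic form of the second differential of
`G_γ` at `ŷ ≡ 1` is not nonnegative definite: some `v ∈ W¹₂[0,1]` satisfies
`∫₀¹ (v')² dx + (2/(1−γ))((∫₀¹ v dx)² − ∫₀¹ v² dx) < 0`. -/
theorem second_differential_indefinite (γ : ℝ)
    (hγ : γ ∈ Ioo (1 - 2 / π ^ 2) 1) :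
    ∃ p ∈ W12,
      (∫ t in (0:ℝ)..1, (p.2 t) ^ 2) +
        2 / (1 - γ) * ((∫ t in (0:ℝ)..1, p.1 t) ^ 2 -
          ∫ t in (0:ℝ)..1, (p.1 t) ^ 2) < 0 := by
  refine ⟨(fun x => cos (π * x), fun x => -π * sin (π * x)), ⟨?_, ?_, ?_⟩, ?_⟩
  · intro x _
    simp [cosInt x]
  · exact Continuous.intervalIntegrable (by fun_prop) 0 1
  · exact Continuous.intervalIntegrable (by fun_prop) 0 1
  · simp only [sinSq, cosMean, cosSq]
    have h1 : 0 < 1 - γ := by linarith [hγ.2]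
    have hπ : (0:ℝ) < π ^ 2 := by positivity
    have h2 : π ^ 2 * (1 - γ) < 2 := by
      have : 1 - γ < 2 / π ^ 2 := by linarith [hγ.1]
      calc π ^ 2 * (1 - γ) < π ^ 2 * (2 / π ^ 2) := by
            exact mul_lt_mul_of_pos_left this hπ
        _ = 2 := by field_simp
    have h3 : π ^ 2 / 2 < 1 / (1 - γ) := by
      rw [div_lt_div_iff₀ (by norm_num) h1]
      linarith
    have : 2 / (1 - γ) * ((0:ℝ) ^ 2 - 1 / 2) = -(1 / (1 - γ)) := by
      field_simp
      ring
    rw [this]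
    linarith
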